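/- For each nonzero ξ ∈ ℝⁿ and each t ≥ 0, the map sending a Schwartz function f on ℝⁿ to ∫₀^t ∫_{ℝⁿ} f(φ) e^{is⟨ξ,φ⟩} dφ ds is a well-defined tempered distribution, and as t → ∞ these distributions converge in the weak-* topology to the tempered distribution f ↦ ∫₀^∞ f̂(sξ) ds. -/

import Mathlib

open MeasureTheory RealInnerProductSpace Filter FourierTransform Real

noncomputable section

instance aux_restrict_temperate (S : Set ℝ) :
    ((volume : Measure ℝ).restrict S).HasTemperateGrowth := by
  obtain ⟨n, hn⟩ :=
    (inferInstance : (volume : Measure ℝ).HasTemperateGrowth).exists_integrable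
  exact ⟨⟨n, hn.restrict⟩⟩

theorem stmt13 {n : ℕ}
    (ξ : EuclideanSpace ℝ (Fin n)) (hξ : ξ ≠ 0) :
    ∃ (T : ℝ → (SchwartzMap (EuclideanSpace ℝ (Fin n)) ℂ →L[ℂ] ℂ))
      (Tinf : SchwartzMap (EuclideanSpace ℝ (Fin n)) ℂ →L[ℂ] ℂ),
      (∀ t : ℝ, 0 ≤ t → ∀ f,
        T t f = ∫ s in Set.Ioc (0 : ℝ) t,
          ∫ φ, f φ * Complex.exp (Complex.I * s * (⟪ξ, φ⟫ : ℝ)))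
      ∧ (∀ f, Tinf f = ∫ s in Set.Ioi (0 : ℝ),
          ∫ φ, f φ * Complex.exp (Complex.I * s * (⟪ξ, φ⟫ : ℝ)))
      ∧ (∀ f, Tendsto (fun t => T t f) atTop (nhds (Tinf f))) := by
  set v : EuclideanSpace ℝ (Fin n) := (-(2 * π)⁻¹) • ξ with hv
  have hvne : v ≠ 0 := by
    simp only [hv, ne_eq, smul_eq_zero, neg_eq_zero, inv_eq_zero, mul_eq_zero]
    push_neg
    exact ⟨⟨two_ne_zero, pi_ne_zero⟩, hξ⟩
  have hg : Function.HasTemperateGrowth (fun s : ℝ => s • v) :=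
    (ContinuousLinearMap.toSpanSingleton ℝ v).hasTemperateGrowth
  have hup : ∃ (k : ℕ) (C : ℝ), ∀ s : ℝ, ‖s‖ ≤ C * (1 + ‖s • v‖) ^ k := by
    refine ⟨1, ‖v‖⁻¹, fun s => ?_⟩
    have hv0 : (0:ℝ) < ‖v‖ := norm_pos_iff.mpr hvne
    calc ‖s‖ = ‖v‖⁻¹ * ‖s • v‖ := by
          rw [norm_smul s v]; field_simp
      _ ≤ ‖v‖⁻¹ * (1 + ‖s • v‖) ^ 1 := by
          rw [pow_one]; gcongr; linarith [norm_nonneg (s • v)]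
  let comp : SchwartzMap (EuclideanSpace ℝ (Fin n)) ℂ →L[ℂ] SchwartzMap ℝ ℂ := SchwartzMap.compCLM ℂ hg hup
  let F : SchwartzMap (EuclideanSpace ℝ (Fin n)) ℂ →L[ℂ] SchwartzMap (EuclideanSpace ℝ (Fin n)) ℂ := SchwartzMap.fourierTransformCLM ℂ
  have key : ∀ (f : SchwartzMap (EuclideanSpace ℝ (Fin n)) ℂ) (s : ℝ), 𝓕 (⇑f) (s • v)
      = ∫ φ, f φ * Complex.exp (Complex.I * s * (⟪ξ, φ⟫ : ℝ)) := by
    intro f s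
    rw [Real.fourier_eq']
    congr 1
    ext φ
    have h1 : ⟪φ, s • v⟫ = -(2 * π)⁻¹ * s * ⟪ξ, φ⟫ := by
      rw [real_inner_smul_right, hv, real_inner_smul_right, real_inner_comm]; ring
    have h2 : (-2 * π) * ⟪φ, s • v⟫ = s * ⟪ξ, φ⟫ := by
      rw [h1]; field_simp
    rw [h2, smul_eq_mul]
    rw [mul_comm]
    congr 1
    push_cast
    ring
  refine ⟨fun t => SchwartzMap.integralCLM ℂ (volume.restrict (Set.Ioc 0 t)) ∘L comp ∘L F,
    SchwartzMap.integralCLM ℂ (volume.restrict (Set.Ioi 0)) ∘L comp ∘L F, ?_, ?_, ?_⟩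
  · intro t _ f
    simp only [ContinuousLinearMap.comp_apply, SchwartzMap.integralCLM_apply]
    refine integral_congr_ae (Eventually.of_forall fun s => ?_)
    show 𝓕 (⇑f) (s • v) = _
    exact key f s
  · intro f
    simp only [ContinuousLinearMap.comp_apply, SchwartzMap.integralCLM_apply]
    refine integral_congr_ae (Eventually.of_forall fun s => ?_)
    show 𝓕 (⇑f) (s • v) = _
    exact key f s
  · intro f
    simp only [ContinuousLinearMap.comp_apply, SchwartzMap.integralCLM_apply]
    have hInt : IntegrableOn (fun s : ℝ => (comp (F f)) s) (Set.Ioi 0) volume :=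
      ((comp (F f)).integrable (μ := volume)).integrableOn
    have h := intervalIntegral_tendsto_integral_Ioi 0 hInt tendsto_id
    refine h.congr' ?_
    filter_upwards [eventually_ge_atTop (0 : ℝ)] with t ht
    simp only [id_eq]
    exact intervalIntegral.integral_of_le ht
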